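/- Let (η_k)_{k∈ℕ} be positive real numbers and (v_k)_{k∈ℕ} ⊂ ℝ³ vectors such that Σ_k (v_k · c)² ≤ θ|c|² for every c ∈ ℝ³, where 0 ≤ θ < 1. For z ∈ ℂ with Im z ≠ 0, the series defining the Zhikov function B(z), with entries B(z)_{ij} = z δ_{ij} + Σ_k z²/(η_k − z) · (v_k)_i (v_k)_j, converges absolutely, and for every c ∈ ℂ³ one has |Im⟨B(z)c, c⟩| ≥ (1 − θ)·|Im z|·‖c‖². -/

import Mathlib

open Finset

open Complex


theorem imA (η : ℕ → ℝ) (z : ℂ) (hz : z.im ≠ 0) (k : ℕ) :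
    (z ^ 2 / ((η k : ℂ) - z)).im = z.im * ((η k)^2 / Complex.normSq ((η k : ℂ) - z) - 1) := by
  have hne : ((η k : ℂ) - z) ≠ 0 := by
    intro h
    have := congrArg Complex.im h
    simp at this
    exact hz this
  have key : z ^ 2 / ((η k : ℂ) - z) = -(z + (η k : ℂ)) + ((η k : ℂ))^2 * ((η k : ℂ) - z)⁻¹ := by
    field_simp
    ring
  rw [key]
  simp [Complex.add_im, Complex.mul_im, Complex.inv_im, Complex.inv_re, Complex.normSq_sub,
    ← Complex.ofReal_pow, div_eq_mul_inv]
  ring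

theorem normA_le (η : ℕ → ℝ) (z : ℂ) (hz : z.im ≠ 0) (k : ℕ) :
    ‖z ^ 2 / ((η k : ℂ) - z)‖ ≤ ‖z‖^2 / |z.im| := by
  rw [norm_div, norm_pow]
  apply div_le_div_of_nonneg_left (by positivity) (abs_pos.mpr hz) ?_
  calc |z.im| = |((η k : ℂ) - z).im| := by simp
    _ ≤ ‖(η k : ℂ) - z‖ := Complex.abs_im_le_norm _

/-- **Imaginary-part lower bound for the Zhikov function.** Given positive reals `η_k`
and vectors `v_k ∈ ℝ³` with `Σ_k (v_k·c)² ≤ θ|c|²` for all real `c` (with `0 ≤ θ < 1`),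
for every `z ∈ ℂ` with `Im z ≠ 0` the series defining the Zhikov function
`B(z)_{ij} = zδ_{ij} + Σ_k z²/(η_k − z)·(v_k)_i(v_k)_j` converges absolutely, and for
every `c ∈ ℂ³` one has `|Im⟨B(z)c, c⟩| ≥ (1 − θ)|Im z|‖c‖²`. -/
theorem zhikov_function_im_lower_bound
    (η : ℕ → ℝ) (hη : ∀ k, 0 < η k)
    (v : ℕ → Fin 3 → ℝ) (θ : ℝ) (hθ0 : 0 ≤ θ) (hθ1 : θ < 1)
    (hsummable : ∀ c : Fin 3 → ℝ, Summable fun k => (∑ i, v k i * c i) ^ 2)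
    (hbound : ∀ c : Fin 3 → ℝ, (∑' k, (∑ i, v k i * c i) ^ 2) ≤ θ * ∑ i, (c i) ^ 2)
    (z : ℂ) (hz : z.im ≠ 0) :
    (∀ i j, Summable fun k => ‖z ^ 2 / ((η k : ℂ) - z) * (v k i : ℂ) * (v k j : ℂ)‖) ∧
    ∀ c : Fin 3 → ℂ,
      (1 - θ) * |z.im| * (∑ i, ‖c i‖ ^ 2) ≤
        |(∑ i, ∑ j, ((if i = j then z else 0) +
            ∑' k, z ^ 2 / ((η k : ℂ) - z) * (v k i : ℂ) * (v k j : ℂ)) * c j *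
              (starRingEnd ℂ) (c i)).im| := by
  set a : ℕ → ℂ := fun k => z ^ 2 / ((η k : ℂ) - z) with ha
  set C : ℝ := ‖z‖^2 / |z.im| with hCdef
  have hC0 : 0 ≤ C := by positivity
  have hC : ∀ k, ‖a k‖ ≤ C := fun k => normA_le η z hz k
  have hv2 : ∀ i, Summable fun k => (v k i)^2 := by
    intro i
    have := hsummable (fun j => if j = i then 1 else 0)
    simpa using this
  have hsum1 : ∀ i j, Summable fun k => ‖a k * (v k i : ℂ) * (v k j : ℂ)‖ := by
    intro i j
    apply Summable.of_nonneg_of_le (fun k => norm_nonneg _) (fun k => ?_)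
      (((hv2 i).add (hv2 j)).mul_left (C/2))
    rw [norm_mul, norm_mul, Complex.norm_real, Complex.norm_real]
    have h1 : |v k i| * |v k j| ≤ ((v k i)^2 + (v k j)^2)/2 := by
      nlinarith [sq_nonneg (|v k i| - |v k j|), _root_.sq_abs (v k i), _root_.sq_abs (v k j),
        abs_nonneg (v k i), abs_nonneg (v k j)]
    have h2 : (0:ℝ) ≤ |v k i| * |v k j| := by positivity
    calc ‖a k‖ * ‖v k i‖ * ‖v k j‖ = ‖a k‖ * (|v k i| * |v k j|) := by
          rw [Real.norm_eq_abs, Real.norm_eq_abs]; ring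
      _ ≤ C * (|v k i| * |v k j|) := mul_le_mul_of_nonneg_right (hC k) h2
      _ ≤ C/2 * ((v k i)^2 + (v k j)^2) := by nlinarith
  refine ⟨hsum1, fun c => ?_⟩
  set w : ℕ → ℂ := fun k => ∑ j, (v k j : ℂ) * c j with hw
  have hwre : ∀ k, (w k).re = ∑ j, v k j * (c j).re := by
    intro k; simp [hw, Complex.re_sum]
  have hwim : ∀ k, (w k).im = ∑ j, v k j * (c j).im := by
    intro k; simp [hw, Complex.im_sum]
  have hns : ∀ k, Complex.normSq (w k)
      = (∑ j, v k j * (c j).re)^2 + (∑ j, v k j * (c j).im)^2 := by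
    intro k; rw [Complex.normSq_apply, hwre, hwim]; ring
  have hnsSummable : Summable fun k => Complex.normSq (w k) := by
    have := (hsummable (fun j => (c j).re)).add (hsummable (fun j => (c j).im))
    exact this.congr fun k => (hns k).symm
  have hnormc : (∑ i, ‖c i‖^2) = ∑ i, Complex.normSq (c i) := by
    apply Finset.sum_congr rfl
    intro i _
    rw [Complex.sq_norm]
  have hnsle : (∑' k, Complex.normSq (w k)) ≤ θ * ∑ i, ‖c i‖^2 := by
    have heq : (∑' k, Complex.normSq (w k))
        = (∑' k, (∑ j, v k j * (c j).re)^2) + (∑' k, (∑ j, v k j * (c j).im)^2) := by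
      rw [← Summable.tsum_add (hsummable _) (hsummable _)]
      exact tsum_congr hns
    rw [heq, hnormc]
    have hb := add_le_add (hbound (fun j => (c j).re)) (hbound (fun j => (c j).im))
    calc _ ≤ θ * (∑ i, (c i).re^2) + θ * (∑ i, (c i).im^2) := hb
      _ = θ * ∑ i, Complex.normSq (c i) := by
          rw [← mul_add, ← Finset.sum_add_distrib]
          congr 1
          exact Finset.sum_congr rfl fun i _ => by rw [Complex.normSq_apply]; ring
  have hsumC : Summable fun k => (Complex.normSq (w k) : ℂ) * a k := by
    apply Summable.of_norm
    apply Summable.of_nonneg_of_le (fun k => norm_nonneg _) (fun k => ?_)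
      (hnsSummable.mul_right C)
    rw [norm_mul, Complex.norm_real, Real.norm_eq_abs,
      _root_.abs_of_nonneg (Complex.normSq_nonneg _)]
    exact mul_le_mul_of_nonneg_left (hC k) (Complex.normSq_nonneg _)
  have hgsum : ∀ i j, Summable fun k => a k * (v k i : ℂ) * (v k j : ℂ) * c j
      * (starRingEnd ℂ) (c i) :=
    fun i j => (((hsum1 i j).of_norm.mul_right _).mul_right _)
  have hk : ∀ k, (∑ i, ∑ j, a k * (v k i : ℂ) * (v k j : ℂ) * c j * (starRingEnd ℂ) (c i))
      = (Complex.normSq (w k) : ℂ) * a k := by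
    intro k
    have hconj : (starRingEnd ℂ) (w k) = ∑ i, (v k i : ℂ) * (starRingEnd ℂ) (c i) := by
      rw [hw]
      rw [map_sum]
      exact Finset.sum_congr rfl fun i _ => by rw [map_mul, Complex.conj_ofReal]
    have hmc : (Complex.normSq (w k) : ℂ) = w k * (starRingEnd ℂ) (w k) :=
      (Complex.mul_conj _).symm
    rw [hmc, hconj, hw]
    simp only [Finset.sum_mul, Finset.mul_sum]
    exact Finset.sum_congr rfl fun i _ => Finset.sum_congr rfl fun j _ => by ring
  have hE : (∑ i, ∑ j, ((if i = j then z else 0) +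
      ∑' k, a k * (v k i : ℂ) * (v k j : ℂ)) * c j * (starRingEnd ℂ) (c i))
      = z * ((∑ i, Complex.normSq (c i) : ℝ) : ℂ)
        + ∑' k, (Complex.normSq (w k) : ℂ) * a k := by
    have split : ∀ i j : Fin 3, ((if i = j then z else 0) +
        ∑' k, a k * (v k i : ℂ) * (v k j : ℂ)) * c j * (starRingEnd ℂ) (c i)
        = (if i = j then z else 0) * c j * (starRingEnd ℂ) (c i)
          + ∑' k, a k * (v k i : ℂ) * (v k j : ℂ) * c j * (starRingEnd ℂ) (c i) := by
      intro i j
      rw [add_mul, add_mul, ← tsum_mul_right, ← tsum_mul_right]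
    simp only [split, Finset.sum_add_distrib]
    congr 1
    · have hdiag : ∀ i : Fin 3, (∑ j, (if i = j then z else 0) * c j * (starRingEnd ℂ) (c i))
          = z * ((Complex.normSq (c i) : ℝ) : ℂ) := by
        intro i
        rw [Finset.sum_eq_single i]
        · rw [if_pos rfl, mul_assoc, Complex.mul_conj]
        · intro b _ hb
          rw [if_neg (fun h => hb h.symm), zero_mul, zero_mul]
        · intro h; exact absurd (Finset.mem_univ i) h
      calc (∑ i, ∑ j, (if i = j then z else 0) * c j * (starRingEnd ℂ) (c i))
          = ∑ i, z * ((Complex.normSq (c i) : ℝ) : ℂ) :=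
            Finset.sum_congr rfl fun i _ => hdiag i
        _ = z * ((∑ i, Complex.normSq (c i) : ℝ) : ℂ) := by
            rw [← Finset.mul_sum]
            push_cast
            ring
    · have swap1 : ∀ i : Fin 3, (∑ j, ∑' k, a k * (v k i : ℂ) * (v k j : ℂ) * c j
          * (starRingEnd ℂ) (c i)) = ∑' k, ∑ j, a k * (v k i : ℂ) * (v k j : ℂ) * c j
          * (starRingEnd ℂ) (c i) :=
        fun i => (Summable.tsum_finsetSum fun j _ => hgsum i j).symm
      simp only [swap1]
      rw [← Summable.tsum_finsetSum (fun i _ => summable_sum fun j _ => hgsum i j)]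
      exact tsum_congr hk
  -- imaginary part computation
  have hNdef : (∑ i, ‖c i‖^2) = ∑ i, Complex.normSq (c i) := hnormc
  set N : ℝ := ∑ i, Complex.normSq (c i) with hNd
  have hN0 : 0 ≤ N := Finset.sum_nonneg fun i _ => Complex.normSq_nonneg _
  -- summability of imaginary parts
  have hsumIm : Summable fun k => Complex.normSq (w k) * (a k).im := by
    have h1 : Summable fun k => ((Complex.normSq (w k) : ℂ) * a k).im :=
      hsumC.map Complex.imCLM.toLinearMap.toAddMonoidHom Complex.continuous_im
    exact h1.congr fun k => by rw [Complex.im_ofReal_mul]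
  set r : ℕ → ℝ := fun k => (η k)^2 / Complex.normSq ((η k : ℂ) - z) with hr
  have hr0 : ∀ k, 0 ≤ r k := fun k => div_nonneg (sq_nonneg _) (Complex.normSq_nonneg _)
  set F : ℕ → ℝ := fun k => Complex.normSq (w k) * (r k - 1) with hF
  have hFsum : Summable F := by
    have := hsumIm.div_const z.im
    apply this.congr
    intro k
    rw [imA η z hz k]
    field_simp [hF]
    ring
  have hrns : Summable fun k => Complex.normSq (w k) * r k := by
    have := hFsum.add hnsSummable
    apply this.congr
    intro k
    simp only [hF]
    ring
  have hFts : (∑' k, F k) = (∑' k, Complex.normSq (w k) * r k) - ∑' k, Complex.normSq (w k) := by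
    rw [← Summable.tsum_sub hrns hnsSummable]
    exact tsum_congr fun k => by simp only [hF]; ring
  have hFge : -(θ * N) ≤ ∑' k, F k := by
    rw [hFts]
    have h1 : 0 ≤ ∑' k, Complex.normSq (w k) * r k :=
      tsum_nonneg fun k => mul_nonneg (Complex.normSq_nonneg _) (hr0 k)
    have h2 := hnsle
    rw [hnormc] at h2
    linarith
  -- im of total
  have hEim : (∑ i, ∑ j, ((if i = j then z else 0) +
      ∑' k, a k * (v k i : ℂ) * (v k j : ℂ)) * c j * (starRingEnd ℂ) (c i)).im
      = z.im * (N + ∑' k, F k) := by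
    rw [hE]
    rw [Complex.add_im, Complex.mul_im, Complex.ofReal_re, Complex.ofReal_im]
    have him : (∑' k, (Complex.normSq (w k) : ℂ) * a k).im
        = ∑' k, Complex.normSq (w k) * (a k).im := by
      have := Complex.imCLM.map_tsum hsumC
      simpa only [Complex.imCLM_apply, Complex.im_ofReal_mul] using this
    rw [him]
    have : (∑' k, Complex.normSq (w k) * (a k).im) = z.im * ∑' k, F k := by
      rw [← tsum_mul_left]
      apply tsum_congr
      intro k
      rw [imA η z hz k]
      simp only [hF, hr]
      ring
    rw [this]
    ring
  rw [hEim, hnormc]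
  have hS : (1 - θ) * N ≤ N + ∑' k, F k := by linarith
  have hS0 : 0 ≤ N + ∑' k, F k := by nlinarith
  rw [abs_mul]
  rw [_root_.abs_of_nonneg hS0]
  calc (1 - θ) * |z.im| * N = |z.im| * ((1 - θ) * N) := by ring
    _ ≤ |z.im| * (N + ∑' k, F k) := mul_le_mul_of_nonneg_left hS (abs_nonneg _)
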